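/- Let R be a commutative ring and let W_n be the Fibonacci-type sequence in R[T] defined by W_0 = 0, W_1 = 1, W_n = f·W_{n-1} + g·W_{n-2} for fixed f, g in R[T]. Then for every n ≥ 0, W_n is congruent modulo f^2 + 4g to n·(-g)^{(n-1)/2} if n is odd, and to (-1)^{(n+2)/2}·n·f·g^{(n-2)/2}/2 if n is even (assuming 2 is invertible in R). -/
import Mathlib


open Polynomial

noncomputable def lucasW {R : Type*} [CommRing R] (f g : Polynomial R) : ℕ → Polynomial R
  | 0 => 0
  | 1 => 1
  | n + 2 => f * lucasW f g (n + 1) + g * lucasW f g n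

noncomputable def tW {R : Type*} [CommRing R] [Invertible (2 : R)]
    (f g : Polynomial R) (n : ℕ) : Polynomial R :=
  if Odd n then (n : Polynomial R) * (-g) ^ ((n - 1) / 2)
  else (-1) ^ ((n + 2) / 2) * (n : Polynomial R) * f * g ^ ((n - 2) / 2) * C (⅟(2 : R))

section Aux

variable {R : Type*} [CommRing R] [Invertible (2 : R)] (f g : Polynomial R)

lemma two_mul_C_inv : (2 : Polynomial R) * C (⅟(2 : R)) = 1 := by
  rw [← map_ofNat (C : R →+* Polynomial R) 2, ← C_mul, mul_invOf_self, C_1]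

lemma tW_odd (m : ℕ) :
    tW f g (2 * m + 1) = ((2 * m + 1 : ℕ) : Polynomial R) * (-g) ^ m := by
  rw [tW, if_pos ⟨m, by ring⟩, show (2 * m + 1 - 1) / 2 = m from by omega]

lemma tW_even (m : ℕ) :
    tW f g (2 * m) =
      (-1) ^ (m + 1) * ((2 * m : ℕ) : Polynomial R) * f * g ^ (m - 1) * C (⅟(2 : R)) := by
  rw [tW, if_neg (by simp [Nat.odd_iff]),
    show (2 * m + 2) / 2 = m + 1 from by omega, show (2 * m - 2) / 2 = m - 1 from by omega]

lemma hkey (n : ℕ) :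
    (f ^ 2 + 4 * g) ∣ (f * tW f g (n + 1) + g * tW f g n - tW f g (n + 2)) := by
  rcases Nat.even_or_odd n with ⟨m, hm⟩ | ⟨m, hm⟩
  · -- n = 2 * m
    match m, hm with
    | 0, hm =>
      subst hm
      have e1 : tW f g (0 + 0 + 1) = 1 := by simp [tW]
      have e0 : tW f g (0 + 0) = 0 := by simp [tW]
      have e2 : tW f g (0 + 0 + 2) = 2 * f * C (⅟(2 : R)) := by
        rw [show (0 + 0 + 2) = 2 * 1 from rfl, tW_even]; push_cast; ring
      rw [e0, e1, e2, show f * 1 + g * 0 - 2 * f * C (⅟(2 : R)) =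
        f * 1 + g * 0 - 2 * f * C (⅟(2 : R)) from rfl]
      have hz : f * 1 + g * 0 - 2 * f * C (⅟(2 : R)) = 0 := by
        linear_combination (-f) * two_mul_C_inv (R := R)
      rw [hz]; exact dvd_zero _
    | (k + 1), hm =>
      subst hm
      have e1 : tW f g ((k + 1) + (k + 1) + 1) =
          ((2 * (k + 1) + 1 : ℕ) : Polynomial R) * (-g) ^ (k + 1) := by
        rw [show (k + 1) + (k + 1) + 1 = 2 * (k + 1) + 1 from by ring, tW_odd]
      have e0 : tW f g ((k + 1) + (k + 1)) =
          (-1) ^ (k + 2) * ((2 * (k + 1) : ℕ) : Polynomial R) * f * g ^ k * C (⅟(2 : R)) := by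
        rw [show (k + 1) + (k + 1) = 2 * (k + 1) from by ring, tW_even]; norm_num
      have e2 : tW f g ((k + 1) + (k + 1) + 2) =
          (-1) ^ (k + 3) * ((2 * (k + 2) : ℕ) : Polynomial R) * f * g ^ (k + 1) * C (⅟(2 : R)) := by
        rw [show (k + 1) + (k + 1) + 2 = 2 * (k + 2) from by ring, tW_even]; norm_num
      rw [e0, e1, e2]
      have hz : f * (((2 * (k + 1) + 1 : ℕ) : Polynomial R) * (-g) ^ (k + 1)) +
          g * ((-1) ^ (k + 2) * ((2 * (k + 1) : ℕ) : Polynomial R) * f * g ^ k * C (⅟(2 : R))) -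
          (-1) ^ (k + 3) * ((2 * (k + 2) : ℕ) : Polynomial R) * f * g ^ (k + 1) * C (⅟(2 : R))
          = 0 := by
        push_cast
        linear_combination ((2 * (k : Polynomial R) + 3) * (-1) ^ (k + 2) * f * g ^ (k + 1)) *
          two_mul_C_inv (R := R)
      rw [hz]; exact dvd_zero _
  · -- n = 2 * m + 1
    subst hm
    refine ⟨(-1) ^ m * (2 * (m : Polynomial R) + 2) * g ^ m * C (⅟(2 : R)), ?_⟩
    have e1 : tW f g (2 * m + 1 + 1) =
        (-1) ^ (m + 2) * ((2 * (m + 1) : ℕ) : Polynomial R) * f * g ^ m * C (⅟(2 : R)) := by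
      rw [show 2 * m + 1 + 1 = 2 * (m + 1) from by ring, tW_even]; norm_num
    have e0 : tW f g (2 * m + 1) = ((2 * m + 1 : ℕ) : Polynomial R) * (-g) ^ m := tW_odd f g m
    have e2 : tW f g (2 * m + 1 + 2) =
        ((2 * (m + 1) + 1 : ℕ) : Polynomial R) * (-g) ^ (m + 1) := by
      rw [show 2 * m + 1 + 2 = 2 * (m + 1) + 1 from by ring, tW_odd]
    rw [e0, e1, e2]
    push_cast
    linear_combination ((-1 : Polynomial R) ^ m * g ^ (m + 1) * (-(4 * m + 4))) *
      two_mul_C_inv (R := R)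

end Aux

theorem lucasW_mod_disc (R : Type*) [CommRing R] [Invertible (2 : R)]
    (f g : Polynomial R) (n : ℕ) :
    (f ^ 2 + 4 * g) ∣
      (lucasW f g n -
        (if Odd n then (n : Polynomial R) * (-g) ^ ((n - 1) / 2)
         else (-1) ^ ((n + 2) / 2) * (n : Polynomial R) * f * g ^ ((n - 2) / 2) *
           C (⅟(2 : R)))) := by
  suffices h : ∀ n, (f ^ 2 + 4 * g) ∣ (lucasW f g n - tW f g n) ∧
      (f ^ 2 + 4 * g) ∣ (lucasW f g (n + 1) - tW f g (n + 1)) by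
    exact (h n).1
  intro n
  induction n with
  | zero =>
    refine ⟨?_, ?_⟩ <;> simp [lucasW, tW]
  | succ n ih =>
    refine ⟨ih.2, ?_⟩
    have key : lucasW f g (n + 2) - tW f g (n + 2) =
        f * (lucasW f g (n + 1) - tW f g (n + 1)) + g * (lucasW f g n - tW f g n) +
        (f * tW f g (n + 1) + g * tW f g n - tW f g (n + 2)) := by
      rw [show lucasW f g (n + 2) = f * lucasW f g (n + 1) + g * lucasW f g n from rfl]
      ring
    rw [key]
    exact dvd_add (dvd_add (ih.2.mul_left f) (ih.1.mul_left g)) (hkey f g n)
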